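/- Let J be a monomial ideal of Borel type in S = k[x_1,...,x_n] with dim(S/J) = d, and let r ≥ n − d. Set J_1 = (J ∩ k[x_1,...,x_r])S and J_2 = J : (x_{r+1}···x_n)^∞. Then J_2/J_1 is a free module of finite rank over k[x_{r+1},...,x_n]. -/

import Mathlib

open MvPolynomial Finsupp Module

namespace Paper

variable {k : Type*} [Field k] {n : ℕ}

/-- `J` is a monomial ideal: generated by a set of monomials. -/
def IsMonomialIdeal (J : Ideal (MvPolynomial (Fin n) k)) : Prop :=
  ∃ G : Set (Fin n →₀ ℕ),
    J = Ideal.span ((fun d => (monomial d (1:k) : MvPolynomial (Fin n) k)) '' G)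

/-- The Borel-type condition: for `i < j` and a monomial `x^d ∈ J` with `x_j ∣ x^d`,
some `x_i^s · x^d / x_j` lies in `J`. -/
def BorelCond (J : Ideal (MvPolynomial (Fin n) k)) : Prop :=
  ∀ i j : Fin n, i < j → ∀ d : Fin n →₀ ℕ,
    (monomial d (1:k) : MvPolynomial (Fin n) k) ∈ J → d j ≠ 0 →
    ∃ s : ℕ,
      (monomial (d + Finsupp.single i s - Finsupp.single j 1) (1:k) :
        MvPolynomial (Fin n) k) ∈ J

/-- `J` is a monomial ideal of Borel type. -/
def IsBorelType (J : Ideal (MvPolynomial (Fin n) k)) : Prop :=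
  IsMonomialIdeal J ∧ BorelCond J

/-- The saturation `J : I^∞`. -/
noncomputable def sat (J I : Ideal (MvPolynomial (Fin n) k)) : Ideal (MvPolynomial (Fin n) k) :=
  ⨆ m : ℕ, Submodule.colon J ((I ^ m) : Ideal (MvPolynomial (Fin n) k))

/-- The product of the variables with (0-based) index `≥ r`, i.e. `x_{r+1} ⋯ x_n`. -/
noncomputable def tailProd (k : Type*) [Field k] (n r : ℕ) : MvPolynomial (Fin n) k :=
  ∏ i ∈ Finset.univ.filter (fun i : Fin n => r ≤ (i : ℕ)), X i

/-- `Φ_r(J) = J : (x_{r+1} ⋯ x_n)^∞`. -/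
noncomputable def Phi (r : ℕ) (J : Ideal (MvPolynomial (Fin n) k)) :
    Ideal (MvPolynomial (Fin n) k) :=
  sat J (Ideal.span {tailProd k n r})

/-- The projection `Π_r : k[x_1,…,x_n] → k[x_1,…,x_r]` sending `x_{r+1},…,x_n` to `0`. -/
noncomputable def projDown (k : Type*) [Field k] (n r : ℕ) :
    MvPolynomial (Fin n) k →ₐ[k] MvPolynomial (Fin r) k :=
  aeval (fun i : Fin n => if h : (i : ℕ) < r then X ⟨i, h⟩ else 0)

/-- `Π_r(J)`, the image ideal of `J` in `k[x_1,…,x_r]`. -/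
noncomputable def PiIdeal (r : ℕ) (J : Ideal (MvPolynomial (Fin n) k)) :
    Ideal (MvPolynomial (Fin r) k) :=
  J.map (projDown k n r).toRingHom

/-- The exponent `d` is a minimal generator of the monomial ideal `J`. -/
def IsMinGen (J : Ideal (MvPolynomial (Fin n) k)) (d : Fin n →₀ ℕ) : Prop :=
  (monomial d (1:k) : MvPolynomial (Fin n) k) ∈ J ∧
    ∀ d' : Fin n →₀ ℕ, d' ≤ d →
      (monomial d' (1:k) : MvPolynomial (Fin n) k) ∈ J → d' = d

/-- The leading exponent of a polynomial with respect to a monomial order. -/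
noncomputable def leadExp (m : MonomialOrder (Fin n)) (f : MvPolynomial (Fin n) k) :
    Fin n →₀ ℕ :=
  m.toSyn.symm (f.support.sup fun d => m.toSyn d)

/-- The initial ideal of `P` with respect to the monomial order `m`. -/
noncomputable def initialIdeal (m : MonomialOrder (Fin n)) (P : Ideal (MvPolynomial (Fin n) k)) :
    Ideal (MvPolynomial (Fin n) k) :=
  Ideal.span {g | ∃ f ∈ P, f ≠ 0 ∧ g = (monomial (leadExp m f) (1:k) : MvPolynomial (Fin n) k)}

/-- A homogeneous ideal: closed under taking homogeneous components. -/
def IsHomogIdeal (P : Ideal (MvPolynomial (Fin n) k)) : Prop :=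
  ∀ f ∈ P, ∀ i : ℕ, homogeneousComponent i f ∈ P

/-- The ideal generated by the variables `x_1, …, x_{i+1}` (0-based indices `≤ i`). -/
noncomputable def varIdealLe (k : Type*) [Field k] {n : ℕ} (i : Fin n) :
    Ideal (MvPolynomial (Fin n) k) :=
  Ideal.span ((fun j : Fin n => (X j : MvPolynomial (Fin n) k)) '' {j | j ≤ i})

/-- The Hilbert series of `S/I` as a power series with integer coefficients. -/
noncomputable def hilb {N : ℕ} (I : Ideal (MvPolynomial (Fin N) k)) : PowerSeries ℤ :=
  PowerSeries.mk fun i =>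
    (Module.finrank k (Submodule.map (Ideal.Quotient.mkₐ k I).toLinearMap
      (homogeneousSubmodule (Fin N) k i)) : ℤ)

/-- The `i`-th Hilbert coefficient read off from the numerator polynomial `q`:
the coefficient of `(t-1)^i` in `q`. -/
noncomputable def hc (q : Polynomial ℤ) (i : ℕ) : ℤ :=
  (Polynomial.taylor 1 q).coeff i

/-- The Krull dimension of the quotient ring `S/I`. -/
noncomputable def qdim {N : ℕ} (I : Ideal (MvPolynomial (Fin N) k)) : WithBot (WithTop ℕ) :=
  ringKrullDim (MvPolynomial (Fin N) k ⧸ I)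

/-- The embedding `k[x_1,…,x_r] → k[x_1,…,x_n]`. -/
noncomputable def inclUp (k : Type*) [Field k] {r n : ℕ} (h : r ≤ n) :
    MvPolynomial (Fin r) k →ₐ[k] MvPolynomial (Fin n) k :=
  rename (Fin.castLE h)

/-- The embedding of variables for the tail subring `k[x_{r+1},…,x_n]`. -/
def tailEmb (n r : ℕ) (h : r ≤ n) : Fin (n - r) → Fin n :=
  fun j => ⟨r + j.1, by omega⟩

/-- The inclusion `k[x_{r+1},…,x_n] → k[x_1,…,x_n]` as a ring hom. -/
noncomputable def tailIncl (k : Type*) [Field k] {n : ℕ} (r : ℕ) (h : r ≤ n) :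
    MvPolynomial (Fin (n - r)) k →+* MvPolynomial (Fin n) k :=
  (rename (tailEmb n r h)).toRingHom

/-- `J₁ = (J ∩ k[x_1,…,x_r])S`: the ideal generated by the monomials of `J`
lying in `k[x_1,…,x_r]`. -/
noncomputable def Jone (r : ℕ) (J : Ideal (MvPolynomial (Fin n) k)) :
    Ideal (MvPolynomial (Fin n) k) :=
  Ideal.span {g | ∃ d : Fin n →₀ ℕ, (∀ i : Fin n, r ≤ (i : ℕ) → d i = 0) ∧
    (monomial d (1:k) : MvPolynomial (Fin n) k) ∈ J ∧
    g = (monomial d (1:k) : MvPolynomial (Fin n) k)}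

/-- The quotient module `J₂/J₁` for ideals `J₁ ≤ J₂`. -/
abbrev quotMod (J₁ J₂ : Ideal (MvPolynomial (Fin n) k)) :=
  (J₂ : Submodule (MvPolynomial (Fin n) k) (MvPolynomial (Fin n) k)) ⧸
    (Submodule.comap
      (J₂ : Submodule (MvPolynomial (Fin n) k) (MvPolynomial (Fin n) k)).subtype
      (J₁ : Submodule (MvPolynomial (Fin n) k) (MvPolynomial (Fin n) k)))

/-- `J₂/J₁` as a module over `k[x_{r+1},…,x_n]`. -/
noncomputable def quotModTail (r : ℕ) (h : r ≤ n) (J₁ J₂ : Ideal (MvPolynomial (Fin n) k)) :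
    Module (MvPolynomial (Fin (n - r)) k) (quotMod J₁ J₂) :=
  Module.compHom _ (tailIncl k r h)

/-- The degrevlex property of a monomial order: compare total degrees first, and break
ties by the *last* variable in which the exponents differ, where *larger* exponent
means *smaller* monomial. -/
def IsDegRevLex (m : MonomialOrder (Fin n)) : Prop :=
  ∀ a b : Fin n →₀ ℕ, (m.toSyn a < m.toSyn b) ↔
    ((a.sum fun _ e => e) < (b.sum fun _ e => e) ∨
      ((a.sum fun _ e => e) = (b.sum fun _ e => e) ∧
        ∃ i : Fin n, b i < a i ∧ ∀ j : Fin n, i < j → a j = b j))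

end Paper


namespace S10

variable {k : Type*} [Field k] {n : ℕ}

/-- upward closed set of exponents -/
def Up (E : Set (Fin n →₀ ℕ)) : Prop := ∀ ⦃e e' : Fin n →₀ ℕ⦄, e ∈ E → e ≤ e' → e' ∈ E

/-- upward closure -/
def upC (G : Set (Fin n →₀ ℕ)) : Set (Fin n →₀ ℕ) := {e | ∃ g ∈ G, g ≤ e}

lemma up_upC (G : Set (Fin n →₀ ℕ)) : Up (upC G) := by
  rintro e e' ⟨g, hg, hge⟩ hee'
  exact ⟨g, hg, hge.trans hee'⟩


lemma eq_of_mem_support_monomial {d e : Fin n →₀ ℕ} {c : k}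
    (he : e ∈ (monomial d c : MvPolynomial (Fin n) k).support) : e = d := by
  classical
  rw [MvPolynomial.support_monomial] at he
  split_ifs at he with h
  · simp at he
  · exact Finset.mem_singleton.1 he

/-- the ideal of polynomials with support in an upward closed set -/
def suppIdeal (E : Set (Fin n →₀ ℕ)) (hE : Up E) : Ideal (MvPolynomial (Fin n) k) where
  carrier := {f | ∀ e ∈ f.support, e ∈ E}
  zero_mem' := by simp
  add_mem' := by
    intro a b ha hb e he
    classical
    rcases Finset.mem_union.1 (MvPolynomial.support_add he) with h | h
    · exact ha e h
    · exact hb e h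
  smul_mem' := by
    intro c f hf e he
    classical
    rw [smul_eq_mul] at he
    rcases Finset.mem_add.1 (MvPolynomial.support_mul c f he) with ⟨a, ha, b, hb, rfl⟩
    exact hE (hf b hb) le_add_self

lemma mem_suppIdeal_iff {E : Set (Fin n →₀ ℕ)} (hE : Up E) (f : MvPolynomial (Fin n) k) :
    f ∈ suppIdeal E hE ↔ ∀ e ∈ f.support, e ∈ E := Iff.rfl

lemma span_monomials_eq (G : Set (Fin n →₀ ℕ)) :
    Ideal.span ((fun d => (monomial d (1:k) : MvPolynomial (Fin n) k)) '' G)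
      = suppIdeal (upC G) (up_upC G) := by
  apply le_antisymm
  · rw [Ideal.span_le]
    rintro _ ⟨d, hd, rfl⟩ e he
    classical
    rcases eq_of_mem_support_monomial he with rfl
    exact ⟨_, hd, le_rfl⟩
  · intro f hf
    rw [f.as_sum]
    refine Ideal.sum_mem _ (fun e he => ?_)
    obtain ⟨g, hg, hge⟩ := hf e he
    have : (monomial e (coeff e f) : MvPolynomial (Fin n) k)
        = monomial (e - g) (coeff e f) * monomial g 1 := by
      rw [monomial_mul, mul_one, tsub_add_cancel_of_le hge]
    rw [this]
    exact Ideal.mul_mem_left _ _ (Ideal.subset_span ⟨g, hg, rfl⟩)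

lemma mem_monomial_span_iff {G : Set (Fin n →₀ ℕ)} {J : Ideal (MvPolynomial (Fin n) k)}
    (hJ : J = Ideal.span ((fun d => (monomial d (1:k) : MvPolynomial (Fin n) k)) '' G))
    (f : MvPolynomial (Fin n) k) :
    f ∈ J ↔ ∀ e ∈ f.support, e ∈ upC G := by
  rw [hJ, span_monomials_eq]; rfl

lemma monomial_mem_iff {G : Set (Fin n →₀ ℕ)} {J : Ideal (MvPolynomial (Fin n) k)}
    (hJ : J = Ideal.span ((fun d => (monomial d (1:k) : MvPolynomial (Fin n) k)) '' G))
    (d : Fin n →₀ ℕ) :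
    (monomial d (1:k) : MvPolynomial (Fin n) k) ∈ J ↔ d ∈ upC G := by
  rw [mem_monomial_span_iff hJ]
  constructor
  · intro h
    exact h d (by simp [MvPolynomial.support_monomial])
  · intro h e he
    classical
    rcases eq_of_mem_support_monomial he with rfl
    exact h

section Tail
open Paper

variable {k : Type*} [Field k] {n : ℕ} (r : ℕ) (hrn : r ≤ n)

/-- head part of an exponent -/
def headP (e : Fin n →₀ ℕ) : Fin n →₀ ℕ := e.filter (fun i : Fin n => (i:ℕ) < r)

/-- the tail vector -/
noncomputable def tv : Fin n →₀ ℕ := ∑ i ∈ Finset.univ.filter (fun i : Fin n => r ≤ (i:ℕ)), single i 1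

/-- embedding of tail exponents -/
noncomputable def temb (b : Fin (n - r) →₀ ℕ) : Fin n →₀ ℕ := Finsupp.mapDomain (tailEmb n r hrn) b

lemma tailEmb_inj : Function.Injective (tailEmb n r hrn) := by
  intro a b hab
  have : r + (a:ℕ) = r + (b:ℕ) := congrArg (fun x : Fin n => (x:ℕ)) hab
  exact Fin.ext (by omega)

lemma mem_range_tailEmb {i : Fin n} : i ∈ Set.range (tailEmb n r hrn) ↔ r ≤ (i:ℕ) := by
  constructor
  · rintro ⟨j, rfl⟩
    simp [tailEmb]
  · intro h
    have hj : (i:ℕ) - r < n - r := by omega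
    exact ⟨⟨(i:ℕ) - r, hj⟩, Fin.ext (by simp [tailEmb]; omega)⟩

variable {r hrn}

lemma headP_apply_lt {e : Fin n →₀ ℕ} {i : Fin n} (h : (i:ℕ) < r) : headP r e i = e i :=
  Finsupp.filter_apply_pos _ _ h

lemma headP_apply_ge {e : Fin n →₀ ℕ} {i : Fin n} (h : r ≤ (i:ℕ)) : headP r e i = 0 :=
  Finsupp.filter_apply_neg _ _ (by omega)

lemma headP_le (e : Fin n →₀ ℕ) : headP r e ≤ e := by
  intro i
  by_cases h : (i:ℕ) < r
  · rw [headP_apply_lt h]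
  · rw [headP_apply_ge (by omega)]; exact Nat.zero_le _

lemma temb_apply_lt {b : Fin (n - r) →₀ ℕ} {i : Fin n} (h : (i:ℕ) < r) : temb r hrn b i = 0 :=
  Finsupp.mapDomain_notin_range _ _ (by rw [mem_range_tailEmb]; omega)

lemma temb_tailEmb (b : Fin (n - r) →₀ ℕ) (j : Fin (n - r)) :
    temb r hrn b (tailEmb n r hrn j) = b j :=
  Finsupp.mapDomain_apply (tailEmb_inj r hrn) _ _

lemma tv_apply (i : Fin n) : tv r i = if r ≤ (i:ℕ) then 1 else 0 := by
  rw [tv, Finsupp.finset_sum_apply]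
  by_cases hc : r ≤ (i:ℕ)
  · rw [if_pos hc]
    rw [Finset.sum_eq_single_of_mem i (by simp [hc])]
    · simp
    · intro b _ hbi
      simp [Finsupp.single_apply, hbi]
  · rw [if_neg hc]
    apply Finset.sum_eq_zero
    intro j hj
    rw [Finset.mem_filter] at hj
    have : j ≠ i := fun h => hc (h ▸ hj.2)
    simp [Finsupp.single_apply, this]

/-- extraction of the tail exponent -/
noncomputable def tget (e : Fin n →₀ ℕ) : Fin (n - r) →₀ ℕ :=
  Finsupp.comapDomain (tailEmb n r hrn) e ((tailEmb_inj r hrn).injOn)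

lemma decomp (e : Fin n →₀ ℕ) : headP r e + temb r hrn (tget (r := r) (hrn := hrn) e) = e := by
  ext i
  rw [Finsupp.add_apply]
  by_cases h : (i:ℕ) < r
  · rw [headP_apply_lt h, temb_apply_lt h]
    omega
  · rw [headP_apply_ge (by omega)]
    have hi : i = tailEmb n r hrn ⟨(i:ℕ) - r, by omega⟩ := Fin.ext (by simp [tailEmb]; omega)
    rw [hi, temb_tailEmb]
    simp [tget, Finsupp.comapDomain_apply, ← hi]

lemma headP_mono {e e' : Fin n →₀ ℕ} (h : e ≤ e') : headP r e ≤ headP r e' := by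
  intro i
  by_cases hc : (i:ℕ) < r
  · rw [headP_apply_lt hc, headP_apply_lt hc]; exact h i
  · rw [headP_apply_ge (by omega)]; exact Nat.zero_le _

lemma up_E1 (G : Set (Fin n →₀ ℕ)) : Up {e | headP r e ∈ upC G} := by
  intro e e' he hee'
  exact up_upC G he (headP_mono hee')

lemma mem_Jone_iff {G : Set (Fin n →₀ ℕ)} {J : Ideal (MvPolynomial (Fin n) k)}
    (hJ : J = Ideal.span ((fun d => (monomial d (1:k) : MvPolynomial (Fin n) k)) '' G))
    (f : MvPolynomial (Fin n) k) :
    f ∈ Jone r J ↔ ∀ e ∈ f.support, headP r e ∈ upC G := by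
  have hset : {g | ∃ d : Fin n →₀ ℕ, (∀ i : Fin n, r ≤ (i : ℕ) → d i = 0) ∧
      (monomial d (1:k) : MvPolynomial (Fin n) k) ∈ J ∧
      g = (monomial d (1:k) : MvPolynomial (Fin n) k)}
      = (fun d => (monomial d (1:k) : MvPolynomial (Fin n) k)) ''
        {d | (∀ i : Fin n, r ≤ (i : ℕ) → d i = 0) ∧ d ∈ upC G} := by
    ext g
    constructor
    · rintro ⟨d, hd0, hdJ, rfl⟩
      exact ⟨d, ⟨hd0, (monomial_mem_iff hJ d).1 hdJ⟩, rfl⟩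
    · rintro ⟨d, ⟨hd0, hdE⟩, rfl⟩
      exact ⟨d, hd0, (monomial_mem_iff hJ d).2 hdE, rfl⟩
  rw [Jone, hset, span_monomials_eq]
  constructor
  · intro h e he
    obtain ⟨d, ⟨hd0, hdE⟩, hde⟩ := h e he
    refine up_upC G hdE ?_
    intro i
    by_cases hc : (i:ℕ) < r
    · rw [headP_apply_lt hc]; exact hde i
    · rw [hd0 i (by omega)]; exact Nat.zero_le _
  · intro h e he
    exact ⟨headP r e, ⟨fun i hi => headP_apply_ge hi, h e he⟩, headP_le e⟩

lemma prodX (s : Finset (Fin n)) :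
    (∏ i ∈ s, X i : MvPolynomial (Fin n) k) = monomial (∑ i ∈ s, single i 1) 1 := by
  classical
  induction s using Finset.induction_on with
  | empty => simp
  | insert _ _ hx ih =>
    rw [Finset.prod_insert hx, Finset.sum_insert hx, ih, X, monomial_mul, one_mul]

lemma tailProd_eq : tailProd k n r = monomial (tv r) 1 := by
  rw [tailProd, tv, prodX]

lemma mem_Phi_iff {G : Set (Fin n →₀ ℕ)} {J : Ideal (MvPolynomial (Fin n) k)}
    (hJ : J = Ideal.span ((fun d => (monomial d (1:k) : MvPolynomial (Fin n) k)) '' G))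
    (f : MvPolynomial (Fin n) k) :
    f ∈ Phi r J ↔ ∀ e ∈ f.support, ∃ m : ℕ, e + m • tv r ∈ upC G := by
  classical
  have hmono : Monotone (fun m : ℕ =>
      Submodule.colon J (((Ideal.span {tailProd k n r}) ^ m : Ideal (MvPolynomial (Fin n) k)) : Set (MvPolynomial (Fin n) k))) := by
    intro m m' hmm'
    intro x hx
    rw [Submodule.mem_colon] at hx ⊢
    intro p hp
    exact hx p (Ideal.pow_le_pow_right hmm' hp)
  rw [Phi, sat, Submodule.mem_iSup_of_directed _ hmono.directed_le]
  constructor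
  · rintro ⟨m, hm⟩ e he
    refine ⟨m, ?_⟩
    have hmem : f * (monomial (m • tv r) 1 : MvPolynomial (Fin n) k) ∈ J := by
      rw [Submodule.mem_colon] at hm
      have h2 := hm (tailProd k n r ^ m)
        (by rw [Ideal.span_singleton_pow]; exact Ideal.subset_span rfl)
      rw [smul_eq_mul, tailProd_eq, monomial_pow, one_pow] at h2
      exact h2
    rw [mem_monomial_span_iff hJ] at hmem
    apply hmem
    rw [MvPolynomial.mem_support_iff, coeff_mul_monomial, mul_one]
    exact MvPolynomial.mem_support_iff.1 he
  · intro h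
    set g : (Fin n →₀ ℕ) → ℕ := fun e =>
      if hh : ∃ m : ℕ, e + m • tv r ∈ upC G then hh.choose else 0 with hg
    set M := f.support.sup g with hM
    refine ⟨M, ?_⟩
    rw [Submodule.mem_colon]
    intro p hp
    rw [Ideal.span_singleton_pow, SetLike.mem_coe, Ideal.mem_span_singleton'] at hp
    obtain ⟨c, rfl⟩ := hp
    have hTf : tailProd k n r ^ M * f ∈ J := by
      rw [mem_monomial_span_iff hJ]
      intro e' he'
      rw [tailProd_eq, monomial_pow, one_pow, mul_comm] at he'
      rcases Finset.mem_add.1 (MvPolynomial.support_mul _ _ he') with ⟨a, ha, b, hb, rfl⟩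
      rcases eq_of_mem_support_monomial hb with rfl
      have h1 : a + g a • tv r ∈ upC G := by
        have h2 := h a ha
        rw [hg]
        simp only
        rw [dif_pos h2]
        exact h2.choose_spec
      refine up_upC G h1 ?_
      intro i
      rw [Finsupp.add_apply, Finsupp.add_apply, Finsupp.smul_apply, Finsupp.smul_apply,
        smul_eq_mul, smul_eq_mul]
      have h3 : g a ≤ M := Finset.le_sup ha
      have h4 := Nat.mul_le_mul_right (tv r i) h3
      omega
    have heq : f • (c * tailProd k n r ^ M) = c * (tailProd k n r ^ M * f) := by
      rw [smul_eq_mul]; ring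
    rw [heq]
    exact Ideal.mul_mem_left _ _ hTf

lemma E2_head {G : Set (Fin n →₀ ℕ)} {e : Fin n →₀ ℕ} :
    (∃ m : ℕ, e + m • tv r ∈ upC G) ↔ (∃ m : ℕ, headP r e + m • tv r ∈ upC G) := by
  constructor
  · rintro ⟨m, hm⟩
    set N := e.support.sup e with hN
    refine ⟨N + m, up_upC G hm ?_⟩
    intro i
    rw [Finsupp.add_apply, Finsupp.add_apply, Finsupp.smul_apply, Finsupp.smul_apply,
      smul_eq_mul, smul_eq_mul, tv_apply]
    have hei : e i ≤ N := by
      by_cases hc : i ∈ e.support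
      · exact Finset.le_sup hc
      · rw [Finsupp.notMem_support_iff.1 hc]; exact Nat.zero_le _
    by_cases hc : (i:ℕ) < r
    · rw [headP_apply_lt hc, if_neg (by omega)]; omega
    · rw [headP_apply_ge (by omega), if_pos (by omega)]; omega
  · rintro ⟨m, hm⟩
    exact ⟨m, up_upC G hm (add_le_add (headP_le e) le_rfl)⟩

/-- tail weight -/
noncomputable def tw (r : ℕ) (e : Fin n →₀ ℕ) : ℕ :=
  ∑ i ∈ Finset.univ.filter (fun i : Fin n => r ≤ (i:ℕ)), e i

lemma claim1 {E : Set (Fin n →₀ ℕ)}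
    (hBor : ∀ i j : Fin n, i < j → ∀ d ∈ E, d j ≠ 0 →
      ∃ s : ℕ, d + single i s - single j 1 ∈ E) :
    ∀ (w : ℕ) (e : Fin n →₀ ℕ), tw r e = w → e ∈ E → ∀ i : Fin n, (i:ℕ) < r →
      ∃ S : ℕ, headP r e + single i S ∈ E := by
  intro w
  induction w with
  | zero =>
    intro e htw he i _
    have hzero : ∀ l : Fin n, r ≤ (l:ℕ) → e l = 0 := by
      intro l hl
      have := (Finset.sum_eq_zero_iff.1 htw) l (by simp [hl])
      exact this
    have hhe : headP r e = e := by
      ext l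
      by_cases hc : (l:ℕ) < r
      · exact headP_apply_lt hc
      · rw [headP_apply_ge (by omega), hzero l (by omega)]
    exact ⟨0, by rw [hhe, Finsupp.single_zero, add_zero]; exact he⟩
  | succ w ih =>
    intro e htw he i hi
    have hex : ∃ j ∈ Finset.univ.filter (fun i : Fin n => r ≤ (i:ℕ)), e j ≠ 0 := by
      by_contra hc
      push_neg at hc
      rw [tw, Finset.sum_eq_zero hc] at htw
      omega
    obtain ⟨j, hjmem, hj0⟩ := hex
    have hjr : r ≤ (j:ℕ) := (Finset.mem_filter.1 hjmem).2
    have hij : i < j := Fin.lt_def.2 (by omega)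
    obtain ⟨s, hs⟩ := hBor i j hij e he hj0
    set e' := e + single i s - single j 1 with he'
    have hne : i ≠ j := Fin.ne_of_lt hij
    have he'app : ∀ l : Fin n, r ≤ (l:ℕ) →
        e' l = e l - (if j = l then 1 else 0) := by
      intro l hl
      rw [he', Finsupp.tsub_apply, Finsupp.add_apply, Finsupp.single_apply,
        Finsupp.single_apply, if_neg (by intro hc; subst hc; omega)]
      omega
    have htw' : tw r e' = w := by
      have h1 : tw r e = e j + ∑ l ∈ (Finset.univ.filter
          (fun i : Fin n => r ≤ (i:ℕ))).erase j, e l :=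
        (Finset.add_sum_erase _ _ hjmem).symm
      have h2 : tw r e' = e' j + ∑ l ∈ (Finset.univ.filter
          (fun i : Fin n => r ≤ (i:ℕ))).erase j, e' l :=
        (Finset.add_sum_erase _ _ hjmem).symm
      have h3 : ∑ l ∈ (Finset.univ.filter
          (fun i : Fin n => r ≤ (i:ℕ))).erase j, e' l
          = ∑ l ∈ (Finset.univ.filter (fun i : Fin n => r ≤ (i:ℕ))).erase j, e l := by
        apply Finset.sum_congr rfl
        intro l hl
        have hlr : r ≤ (l:ℕ) := (Finset.mem_filter.1 (Finset.mem_of_mem_erase hl)).2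
        rw [he'app l hlr, if_neg (Finset.ne_of_mem_erase hl).symm]
        omega
      have h4 : e' j = e j - 1 := by rw [he'app j hjr, if_pos rfl]
      rw [h2, h3, h4]
      rw [h1] at htw
      omega
    have hhead : headP r e' = headP r e + single i s := by
      ext l
      rw [Finsupp.add_apply]
      by_cases hc : (l:ℕ) < r
      · rw [headP_apply_lt hc, headP_apply_lt hc, he', Finsupp.tsub_apply,
          Finsupp.add_apply]
        have hj0 : (single j (1:ℕ)) l = 0 := by
          rw [Finsupp.single_apply, if_neg (by intro hcc; subst hcc; omega)]
        rw [hj0]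
        omega
      · rw [headP_apply_ge (by omega), headP_apply_ge (by omega)]
        have hi0 : (single i s) l = 0 := by
          rw [Finsupp.single_apply, if_neg (by intro hcc; subst hcc; omega)]
        rw [hi0]
    obtain ⟨S', hS'⟩ := ih e' htw' hs i hi
    refine ⟨s + S', ?_⟩
    rw [hhead] at hS'
    rw [add_assoc, ← Finsupp.single_add] at hS'
    exact hS' 
    
lemma finA {E : Set (Fin n →₀ ℕ)} (hUp : Up E)
    (hBor : ∀ i j : Fin n, i < j → ∀ d ∈ E, d j ≠ 0 →
      ∃ s : ℕ, d + single i s - single j 1 ∈ E) :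
    {a : Fin n →₀ ℕ | (∀ i : Fin n, r ≤ (i:ℕ) → a i = 0) ∧
      (∃ m : ℕ, a + m • tv r ∈ E) ∧ a ∉ E}.Finite := by
  classical
  set E2' : Set (Fin n →₀ ℕ) := {a | (∀ i : Fin n, r ≤ (i:ℕ) → a i = 0) ∧
      ∃ m : ℕ, a + m • tv r ∈ E} with hE2'
  set Min : Set (Fin n →₀ ℕ) := {a ∈ E2' | ∀ b ∈ E2', b ≤ a → b = a} with hMin
  have hdeg : ∀ a b : Fin n →₀ ℕ, a ≤ b → a ≠ b → (∑ i, a i) < ∑ i, b i := by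
    intro a b hab hne
    obtain ⟨i, hi⟩ : ∃ i, a i ≠ b i := by
      by_contra hc; push_neg at hc; exact hne (Finsupp.ext hc)
    exact Finset.sum_lt_sum (fun i _ => hab i) ⟨i, Finset.mem_univ i, lt_of_le_of_ne (hab i) hi⟩
  have hmin : ∀ a ∈ E2', ∃ a₀ ∈ Min, a₀ ≤ a := by
    have key : ∀ N : ℕ, ∀ a ∈ E2', (∑ i, a i) ≤ N → ∃ a₀ ∈ Min, a₀ ≤ a := by
      intro N
      induction N with
      | zero =>
        intro a ha hN
        by_cases hm : a ∈ Min
        · exact ⟨a, hm, le_rfl⟩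
        · exfalso
          rw [hMin] at hm
          simp only [Set.mem_setOf_eq, not_and, not_forall] at hm
          obtain ⟨b, hb, hba, hne⟩ := hm ha
          exact absurd (hdeg b a hba hne) (by omega)
      | succ N ihN =>
        intro a ha hN
        by_cases hm : a ∈ Min
        · exact ⟨a, hm, le_rfl⟩
        · rw [hMin] at hm
          simp only [Set.mem_setOf_eq, not_and, not_forall] at hm
          obtain ⟨b, hb, hba, hne⟩ := hm ha
          have := hdeg b a hba hne
          obtain ⟨a₀, ha₀, ha₀b⟩ := ihN b hb (by omega)
          exact ⟨a₀, ha₀, ha₀b.trans hba⟩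
    intro a ha
    exact key (∑ i, a i) a ha le_rfl
  have hMinFin : Min.Finite := by
    have hanti : IsAntichain (· ≤ ·) Min := by
      intro a ha b hb hne hab
      exact hne (hb.2 a ha.1 hab)
    exact hanti.finite_of_partiallyWellOrderedOn (Set.isPWO_of_wellQuasiOrderedLE Min)
  set Sfun : (Fin n →₀ ℕ) → Fin n → ℕ := fun a i =>
    if h : ∃ S : ℕ, a + single i S ∈ E then h.choose else 0 with hSfun
  have hS : ∀ a₀ ∈ Min, ∀ i : Fin n, (i:ℕ) < r → a₀ + single i (Sfun a₀ i) ∈ E := by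
    intro a₀ ha₀ i hi
    obtain ⟨m, hm⟩ := ha₀.1.2
    have hhead : headP r (a₀ + m • tv r) = a₀ := by
      ext l
      by_cases hc : (l:ℕ) < r
      · rw [headP_apply_lt hc, Finsupp.add_apply, Finsupp.smul_apply, tv_apply,
          if_neg (by omega)]
        simp
      · rw [headP_apply_ge (by omega), ha₀.1.1 l (by omega)]
    obtain ⟨S, hSS⟩ := claim1 hBor (tw r (a₀ + m • tv r)) _ rfl hm i hi
    rw [hhead] at hSS
    have hex : ∃ S : ℕ, a₀ + single i S ∈ E := ⟨S, hSS⟩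
    rw [hSfun]; simp only; rw [dif_pos hex]; exact hex.choose_spec
  set B : (Fin n →₀ ℕ) → (Fin n →₀ ℕ) := fun a₀ =>
    a₀ + ∑ i ∈ Finset.univ.filter (fun i : Fin n => (i:ℕ) < r), single i (Sfun a₀ i) with hB
  have hBapp : ∀ a₀, ∀ i : Fin n, (i:ℕ) < r → B a₀ i = a₀ i + Sfun a₀ i := by
    intro a₀ i hi
    rw [hB]; simp only [Finsupp.add_apply]
    congr 1
    rw [Finsupp.finset_sum_apply, Finset.sum_eq_single_of_mem i (by simp [hi])]
    · simp
    · intro b _ hbi; simp [Finsupp.single_apply, hbi]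
  apply Set.Finite.subset (hMinFin.biUnion (fun a₀ _ => Set.finite_Iic (B a₀)))
  rintro a ⟨htf, hmem, hnotE⟩
  have haE2' : a ∈ E2' := ⟨htf, hmem⟩
  obtain ⟨a₀, ha₀, ha₀a⟩ := hmin a haE2'
  refine Set.mem_biUnion ha₀ ?_
  rw [Set.mem_Iic]
  intro i
  by_cases hc : (i:ℕ) < r
  · rw [hBapp a₀ i hc]
    by_contra hgt
    push_neg at hgt
    apply hnotE
    apply hUp (hS a₀ ha₀ i hc)
    intro l
    rw [Finsupp.add_apply, Finsupp.single_apply]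
    by_cases hl : i = l
    · subst hl; rw [if_pos rfl]; omega
    · rw [if_neg hl, add_zero]; exact ha₀a l
  · rw [htf i (by omega)]; exact Nat.zero_le _

lemma tailIncl_monomial (hrn' : r ≤ n) (b : Fin (n - r) →₀ ℕ) (c : k) :
    tailIncl k r hrn' (monomial b c) = monomial (temb r hrn' b) c := by
  simp only [tailIncl, AlgHom.toRingHom_eq_coe, RingHom.coe_coe, rename_monomial, temb]

set_option synthInstance.maxHeartbeats 1000000 in
set_option maxHeartbeats 2000000 in
lemma mainThm (hrn' : r ≤ n) (J : Ideal (MvPolynomial (Fin n) k)) (hB : Paper.IsBorelType J) :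
    @Module.Free (MvPolynomial (Fin (n - r)) k) (Paper.quotMod (Paper.Jone r J) (Paper.Phi r J))
      _ _ (Paper.quotModTail r hrn' (Paper.Jone r J) (Paper.Phi r J)) ∧
    @Module.Finite (MvPolynomial (Fin (n - r)) k) (Paper.quotMod (Paper.Jone r J) (Paper.Phi r J))
      _ _ (Paper.quotModTail r hrn' (Paper.Jone r J) (Paper.Phi r J)) := by
  classical
  obtain ⟨⟨G, hG⟩, hBorel⟩ := hB
  set J₁ := Paper.Jone r J with hJ₁
  set J₂ := Paper.Phi r J with hJ₂
  letI instT := Paper.quotModTail r hrn' J₁ J₂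
  have hBor' : ∀ i j : Fin n, i < j → ∀ d ∈ upC G, d j ≠ 0 →
      ∃ s : ℕ, d + single i s - single j 1 ∈ upC G := by
    intro i j hij d hd hdj
    obtain ⟨s, hs⟩ := hBorel i j hij d ((monomial_mem_iff hG d).2 hd) hdj
    exact ⟨s, (monomial_mem_iff hG _).1 hs⟩
  set A : Set (Fin n →₀ ℕ) := {a | (∀ i : Fin n, r ≤ (i:ℕ) → a i = 0) ∧
    (∃ m : ℕ, a + m • tv r ∈ upC G) ∧ a ∉ upC G} with hA
  have hAfin : A.Finite := finA (up_upC G) hBor'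
  have hAmem : ∀ a : ↥A, (monomial (a : Fin n →₀ ℕ) (1:k) : MvPolynomial (Fin n) k) ∈ J₂ := by
    intro a
    rw [hJ₂, mem_Phi_iff hG]
    intro e' he'
    rcases eq_of_mem_support_monomial he' with rfl
    exact a.2.2.1
  set N : Submodule (MvPolynomial (Fin n) k)
      ↥(J₂ : Submodule (MvPolynomial (Fin n) k) (MvPolynomial (Fin n) k)) :=
    Submodule.comap
      (J₂ : Submodule (MvPolynomial (Fin n) k) (MvPolynomial (Fin n) k)).subtype
      (J₁ : Submodule (MvPolynomial (Fin n) k) (MvPolynomial (Fin n) k)) with hN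
  set q : ↥(J₂ : Submodule (MvPolynomial (Fin n) k) (MvPolynomial (Fin n) k))
      →ₗ[MvPolynomial (Fin n) k] Paper.quotMod J₁ J₂ := Submodule.mkQ N with hq
  set v : ↥A → Paper.quotMod J₁ J₂ := fun a =>
    q ⟨monomial (a : Fin n →₀ ℕ) 1, hAmem a⟩ with hv
  set ψ : (↥A →₀ MvPolynomial (Fin (n - r)) k) →ₗ[MvPolynomial (Fin (n - r)) k]
      Paper.quotMod J₁ J₂ := Finsupp.linearCombination _ v with hψdef
  have key : ∀ (t : MvPolynomial (Fin (n - r)) k)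
      (x : ↥(J₂ : Submodule (MvPolynomial (Fin n) k) (MvPolynomial (Fin n) k))),
      t • q x = q ⟨Paper.tailIncl k r hrn' t * (x : MvPolynomial (Fin n) k),
        J₂.mul_mem_left _ x.2⟩ := by
    intro t x
    rfl
  -- injectivity
  have hinj0 : ∀ c : ↥A →₀ MvPolynomial (Fin (n - r)) k, ψ c = 0 → c = 0 := by
    intro c hc
    by_contra hc0
    obtain ⟨a, ha⟩ := Finsupp.support_nonempty_iff.2 hc0
    have hca : c a ≠ 0 := Finsupp.mem_support_iff.1 ha
    obtain ⟨b, hb⟩ : ∃ b, b ∈ (c a).support :=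
      Finset.nonempty_iff_ne_empty.2 (fun h => hca (MvPolynomial.support_eq_empty.1 h))
    set g : MvPolynomial (Fin n) k :=
      ∑ a' ∈ c.support, Paper.tailIncl k r hrn' (c a') * monomial (a' : Fin n →₀ ℕ) 1 with hgdef
    have hgmem : g ∈ J₂ :=
      Ideal.sum_mem _ (fun a' _ => Ideal.mul_mem_left _ _ (hAmem a'))
    have hψc : ψ c = q ⟨g, hgmem⟩ := by
      rw [hψdef, Finsupp.linearCombination_apply, Finsupp.sum]
      rw [Finset.sum_congr rfl
        (fun a' _ => key (c a') ⟨monomial (a' : Fin n →₀ ℕ) 1, hAmem a'⟩)]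
      rw [← map_sum]
      congr 1
      apply Subtype.ext
      rw [AddSubmonoidClass.coe_finset_sum]
    have hgN : (⟨g, hgmem⟩ : ↥(J₂ : Submodule (MvPolynomial (Fin n) k)
        (MvPolynomial (Fin n) k))) ∈ N := by
      apply (Submodule.Quotient.mk_eq_zero N).1
      rw [← Submodule.mkQ_apply]
      exact hψc ▸ hc
    have hgJ₁ : g ∈ J₁ := by simpa [hN] using hgN
    set e0 : Fin n →₀ ℕ := (a : Fin n →₀ ℕ) + temb r hrn' b with he0def
    have hcoeff : coeff e0 g = coeff b (c a) := by
      rw [hgdef, MvPolynomial.coeff_sum]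
      rw [Finset.sum_eq_single a]
      · rw [coeff_mul_monomial', if_pos (self_le_add_right _ _ : (a:Fin n→₀ℕ) ≤ e0)]
        rw [he0def, add_tsub_cancel_left]
        rw [Paper.tailIncl, AlgHom.toRingHom_eq_coe, RingHom.coe_coe, temb,
          coeff_rename_mapDomain _ (tailEmb_inj r hrn'), mul_one]
      · intro a' ha' hne
        rw [coeff_mul_monomial']
        split_ifs with hle
        · have hza : coeff (e0 - (a' : Fin n →₀ ℕ)) (Paper.tailIncl k r hrn' (c a')) = 0 := by
            by_contra hnz
            rw [Paper.tailIncl, AlgHom.toRingHom_eq_coe, RingHom.coe_coe] at hnz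
            obtain ⟨u, hu, _⟩ := coeff_rename_ne_zero _ _ _ hnz
            apply hne
            apply Subtype.ext
            ext i
            by_cases hir : (i:ℕ) < r
            · have h1 : Finsupp.mapDomain (tailEmb n r hrn') u i = 0 :=
                Finsupp.mapDomain_notin_range _ _ (by rw [mem_range_tailEmb]; omega)
              have h2 : (e0 - (a' : Fin n →₀ ℕ)) i = 0 := by rw [← hu]; exact h1
              rw [Finsupp.tsub_apply] at h2
              have h3 : e0 i = (a : Fin n →₀ ℕ) i := by
                rw [he0def, Finsupp.add_apply, temb_apply_lt hir, add_zero]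
              have h4 : (a' : Fin n →₀ ℕ) i ≤ e0 i := hle i
              rw [h3] at h2 h4
              omega
            · rw [a.2.1 i (by omega), a'.2.1 i (by omega)]
          rw [hza, zero_mul]
        · rfl
      · intro h
        exact absurd ha h
    have he0 : e0 ∈ g.support :=
      MvPolynomial.mem_support_iff.2 (by rw [hcoeff]; exact MvPolynomial.mem_support_iff.1 hb)
    have hhg := (mem_Jone_iff hG g).1 hgJ₁ e0 he0
    have hh : headP r e0 = (a : Fin n →₀ ℕ) := by
      ext i
      by_cases hir : (i:ℕ) < r
      · rw [headP_apply_lt hir, he0def, Finsupp.add_apply, temb_apply_lt hir, add_zero]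
      · rw [headP_apply_ge (by omega), a.2.1 i (by omega)]
    exact a.2.2.2 (hh ▸ hhg)
  -- surjectivity
  have hsurj : Function.Surjective ψ := by
    intro z
    obtain ⟨x0, rfl⟩ := Submodule.Quotient.mk_surjective N z
    obtain ⟨f, hf⟩ := x0
    have hrange : q ⟨f, hf⟩ ∈ LinearMap.range ψ := by
      have hterm : ∀ e : Fin n →₀ ℕ,
          (monomial e (coeff e f) : MvPolynomial (Fin n) k) ∈ J₂ := by
        intro e
        by_cases he : e ∈ f.support
        · rw [hJ₂, mem_Phi_iff hG]
          intro e' he'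
          rcases eq_of_mem_support_monomial he' with rfl
          have hf' : f ∈ Paper.Phi r J := hf
          exact (mem_Phi_iff hG f).1 hf' _ he
        · rw [MvPolynomial.notMem_support_iff.1 he, map_zero]
          exact J₂.zero_mem
      have hdec : (⟨f, hf⟩ : ↥(J₂ : Submodule (MvPolynomial (Fin n) k)
          (MvPolynomial (Fin n) k)))
          = ∑ e ∈ f.support, ⟨monomial e (coeff e f), hterm e⟩ := by
        apply Subtype.ext
        rw [AddSubmonoidClass.coe_finset_sum]
        exact f.as_sum
      rw [hdec, map_sum]
      refine Submodule.sum_mem _ (fun e he => ?_)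
      by_cases hE1 : headP r e ∈ upC G
      · have hin : (⟨monomial e (coeff e f), hterm e⟩ : ↥(J₂ : Submodule
            (MvPolynomial (Fin n) k) (MvPolynomial (Fin n) k))) ∈ N := by
          rw [hN]
          simp only [Submodule.mem_comap, Submodule.subtype_apply]
          rw [hJ₁, mem_Jone_iff hG]
          intro e' he'
          rcases eq_of_mem_support_monomial he' with rfl
          exact hE1
        rw [hq, Submodule.mkQ_apply, (Submodule.Quotient.mk_eq_zero N).2 hin]
        exact Submodule.zero_mem _
      · have hf' : f ∈ Paper.Phi r J := hf
        have heE2 : ∃ m : ℕ, e + m • tv r ∈ upC G := (mem_Phi_iff hG f).1 hf' e he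
        have haA : headP r e ∈ A :=
          ⟨fun i hi => headP_apply_ge hi, E2_head.1 heE2, hE1⟩
        refine ⟨Finsupp.single ⟨headP r e, haA⟩
          (monomial (tget (r := r) (hrn := hrn') e) (coeff e f)), ?_⟩
        rw [hψdef, Finsupp.linearCombination_single, hv]
        rw [key]
        apply congrArg
        apply Subtype.ext
        show Paper.tailIncl k r hrn' (monomial (tget (r := r) (hrn := hrn') e)
            (coeff e f)) * monomial (headP r e) 1 = monomial e (coeff e f)
        rw [tailIncl_monomial, monomial_mul, mul_one, add_comm, decomp]
    obtain ⟨c, hcc⟩ := hrange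
    exact ⟨c, hcc⟩
  have hbij : Function.Bijective ψ := by
    constructor
    · intro x y hxy
      have h0 := hinj0 (x - y) (by rw [map_sub, hxy, sub_self])
      exact sub_eq_zero.1 h0
    · exact hsurj
  let equiv : (↥A →₀ MvPolynomial (Fin (n - r)) k) ≃ₗ[MvPolynomial (Fin (n - r)) k]
      Paper.quotMod J₁ J₂ := LinearEquiv.ofBijective ψ hbij
  haveI : Finite ↥A := hAfin.to_subtype
  constructor
  · exact Module.Free.of_equiv equiv
  · exact Module.Finite.equiv equiv

end Tail

end S10

open Paper MvPolynomial

/-- For a Borel-type monomial ideal `J` with `dim(S/J) = d` and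
`r ≥ n - d`, the quotient `J₂/J₁` (with `J₁ = (J ∩ k[x_1,…,x_r])S` and
`J₂ = J : (x_{r+1}⋯x_n)^∞`) is a free module of finite rank over `k[x_{r+1},…,x_n]`. -/
theorem stmt10 {k : Type*} [Field k] {n : ℕ}
    (J : Ideal (MvPolynomial (Fin n) k)) (hB : IsBorelType J)
    (d : ℕ) (hd : qdim J = (d : WithBot (WithTop ℕ)))
    (r : ℕ) (hrn : r ≤ n) (hrd : n - d ≤ r) :
    @Module.Free (MvPolynomial (Fin (n - r)) k) (quotMod (Jone r J) (Phi r J)) _ _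
      (quotModTail r hrn (Jone r J) (Phi r J)) ∧
    @Module.Finite (MvPolynomial (Fin (n - r)) k) (quotMod (Jone r J) (Phi r J)) _ _
      (quotModTail r hrn (Jone r J) (Phi r J)) := by
  exact S10.mainThm hrn J hB
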